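/- Fix p, q ∈ ℕ. There exists a constant C > 0 such that for all n and all (a₀,...,aₙ) ∈ {0,1}^{n+1}, the sum of ‖M‖ over all products M = T₀ ⋯ Tₙ, where exactly p of the Tⱼ equal α_{aⱼ}, exactly q of the Tⱼ equal β_{aⱼ}, and all remaining Tⱼ equal I_{aⱼ}, is at most C·(n+1)^q. -/

import Mathlib

open Matrix Finset

/-- `I₀ = [[1,0],[1/2,1/2]]`, `I₁ = [[1/2,1/2],[0,1]]`. -/
noncomputable def Imat : Fin 2 → Matrix (Fin 2) (Fin 2) ℝ
  | 0 => !![1, 0; 1/2, 1/2]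
  | 1 => !![1/2, 1/2; 0, 1]

/-- `α₀ = (1/2)[[0,0],[1,-1]]`, `α₁ = (1/2)[[1,-1],[0,0]]`. -/
noncomputable def amat : Fin 2 → Matrix (Fin 2) (Fin 2) ℝ
  | 0 => !![0, 0; 1/2, -1/2]
  | 1 => !![1/2, -1/2; 0, 0]

/-- `β₀ = (1/2)[[0,0],[1,1]]`, `β₁ = (1/2)[[1,1],[0,0]]`. -/
noncomputable def bmat : Fin 2 → Matrix (Fin 2) (Fin 2) ℝ
  | 0 => !![0, 0; 1/2, 1/2]
  | 1 => !![1/2, 1/2; 0, 0]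

/-- The maximum-row-sum norm of a real 2×2 matrix. -/
noncomputable def rowNorm (M : Matrix (Fin 2) (Fin 2) ℝ) : ℝ :=
  max (|M 0 0| + |M 0 1|) (|M 1 0| + |M 1 1|)

/-- The product `T₀ T₁ ⋯ Tₙ` where `Tⱼ = α_{aⱼ}` for `j ∈ s`, `Tⱼ = β_{aⱼ}` for `j ∈ t`
and `Tⱼ = I_{aⱼ}` otherwise. -/
noncomputable def prodIAB (n : ℕ) (a : ℕ → Fin 2) (s t : Finset ℕ) :
    Matrix (Fin 2) (Fin 2) ℝ :=
  ((List.range (n + 1)).map fun j =>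
    if j ∈ s then amat (a j) else if j ∈ t then bmat (a j) else Imat (a j)).prod

lemma rowNorm_nonneg (M : Matrix (Fin 2) (Fin 2) ℝ) : 0 ≤ rowNorm M :=
  le_trans (by positivity) (le_max_left (|M 0 0| + |M 0 1|) (|M 1 0| + |M 1 1|))
lemma row_dot (a c b00 b01 b10 b11 R : ℝ) (h1 : |b00| + |b01| ≤ R) (h2 : |b10| + |b11| ≤ R) :
    |a * b00 + c * b10| + |a * b01 + c * b11| ≤ (|a| + |c|) * R := by
  have h3 := abs_add_le (a * b00) (c * b10)
  have h4 := abs_add_le (a * b01) (c * b11)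
  rw [abs_mul, abs_mul] at h3 h4
  nlinarith [abs_nonneg a, abs_nonneg c, abs_nonneg b00, abs_nonneg b01, abs_nonneg b10,
    abs_nonneg b11]
lemma rowNorm_mul_le (A B : Matrix (Fin 2) (Fin 2) ℝ) :
    rowNorm (A * B) ≤ rowNorm A * rowNorm B := by
  have hB0 : |B 0 0| + |B 0 1| ≤ rowNorm B := le_max_left _ _
  have hB1 : |B 1 0| + |B 1 1| ≤ rowNorm B := le_max_right _ _
  have hBn := rowNorm_nonneg B
  have h0 : |(A * B) 0 0| + |(A * B) 0 1| ≤ (|A 0 0| + |A 0 1|) * rowNorm B := by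
    simp only [Matrix.mul_apply, Fin.sum_univ_two]
    exact row_dot _ _ _ _ _ _ _ hB0 hB1
  have h1 : |(A * B) 1 0| + |(A * B) 1 1| ≤ (|A 1 0| + |A 1 1|) * rowNorm B := by
    simp only [Matrix.mul_apply, Fin.sum_univ_two]
    exact row_dot _ _ _ _ _ _ _ hB0 hB1
  have hA0 : |A 0 0| + |A 0 1| ≤ rowNorm A := le_max_left _ _
  have hA1 : |A 1 0| + |A 1 1| ≤ rowNorm A := le_max_right _ _
  exact max_le (h0.trans (mul_le_mul_of_nonneg_right hA0 hBn))
    (h1.trans (mul_le_mul_of_nonneg_right hA1 hBn))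
lemma rowNorm_smul (c : ℝ) (M : Matrix (Fin 2) (Fin 2) ℝ) :
    rowNorm (c • M) = |c| * rowNorm M := by
  unfold rowNorm
  simp only [Matrix.smul_apply, smul_eq_mul, abs_mul, ← mul_add]
  rcases le_total (|M 0 0| + |M 0 1|) (|M 1 0| + |M 1 1|) with h | h
  · rw [max_eq_right h, max_eq_right (mul_le_mul_of_nonneg_left h (abs_nonneg c))]
  · rw [max_eq_left h, max_eq_left (mul_le_mul_of_nonneg_left h (abs_nonneg c))]
lemma rowNorm_one : rowNorm 1 = 1 := by
  unfold rowNorm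
  norm_num [Matrix.one_apply]
lemma rowNorm_Imat (i : Fin 2) : rowNorm (Imat i) ≤ 1 := by
  fin_cases i <;> norm_num [rowNorm, Imat, abs]
lemma rowNorm_amat (i : Fin 2) : rowNorm (amat i) ≤ 1 := by
  fin_cases i <;> norm_num [rowNorm, amat, abs]
lemma rowNorm_bmat (i : Fin 2) : rowNorm (bmat i) ≤ 1 := by
  fin_cases i <;> norm_num [rowNorm, bmat, abs]
lemma rowNorm_list_prod_le_one (L : List (Matrix (Fin 2) (Fin 2) ℝ))
    (h : ∀ M ∈ L, rowNorm M ≤ 1) : rowNorm L.prod ≤ 1 := by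
  induction L with
  | nil => simp [rowNorm_one]
  | cons M L ih =>
    rw [List.prod_cons]
    have h1 : rowNorm M ≤ 1 := h M (List.mem_cons_self)
    have h2 : rowNorm L.prod ≤ 1 := ih fun N hN => h N (List.mem_cons_of_mem _ hN)
    calc rowNorm (M * L.prod) ≤ rowNorm M * rowNorm L.prod := rowNorm_mul_le _ _
      _ ≤ 1 * 1 := mul_le_mul h1 h2 (rowNorm_nonneg _) zero_le_one
      _ = 1 := mul_one 1
lemma amat_mul_Imat (i i' : Fin 2) : amat i * Imat i' = (1/2 : ℝ) • amat i := by
  fin_cases i <;> fin_cases i' <;>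
    · ext r c
      fin_cases r <;> fin_cases c <;>
        norm_num [amat, Imat, Matrix.mul_apply, Fin.sum_univ_two]
lemma amat_mul_amat (i i' : Fin 2) :
    ∃ c : ℝ, amat i * amat i' = c • amat i ∧ |c| = 1/2 := by
  fin_cases i <;> fin_cases i'
  · exact ⟨-(1/2), by ext r c; fin_cases r <;> fin_cases c <;>
      norm_num [amat, Matrix.mul_apply, Fin.sum_univ_two], by norm_num⟩
  · exact ⟨1/2, by ext r c; fin_cases r <;> fin_cases c <;>
      norm_num [amat, Matrix.mul_apply, Fin.sum_univ_two], by norm_num⟩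
  · exact ⟨-(1/2), by ext r c; fin_cases r <;> fin_cases c <;>
      norm_num [amat, Matrix.mul_apply, Fin.sum_univ_two], by norm_num⟩
  · exact ⟨1/2, by ext r c; fin_cases r <;> fin_cases c <;>
      norm_num [amat, Matrix.mul_apply, Fin.sum_univ_two], by norm_num⟩
lemma key_decay (s t : Finset ℕ) (a : ℕ → Fin 2) (l : List ℕ) (hl : ∀ j ∈ l, j ∉ t)
    (i : Fin 2) :
    ∃ (c : ℝ) (i' : Fin 2),
      amat i * (l.map fun j => if j ∈ s then amat (a j) else if j ∈ t then bmat (a j)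
          else Imat (a j)).prod = c • amat i' ∧
      |c| ≤ (1/2 : ℝ) ^ (l.countP fun j => decide (j ∉ s)) := by
  induction l with
  | nil => exact ⟨1, i, by simp, by simp⟩
  | cons j l ih =>
    have hjt : j ∉ t := hl j (List.mem_cons_self)
    obtain ⟨c, i', hc, hcle⟩ := ih fun k hk => hl k (List.mem_cons_of_mem _ hk)
    have hcnt := List.countP_cons (p := fun j => decide (j ∉ s)) (a := j) (l := l)
    by_cases hjs : j ∈ s
    · obtain ⟨c₀, hc₀, hc₀abs⟩ := amat_mul_amat i (a j)
      refine ⟨c₀ * c, i', ?_, ?_⟩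
      · simp only [List.map_cons, List.prod_cons, hjs, if_pos]
        rw [← mul_assoc, hc₀, smul_mul_assoc, hc, smul_smul]
      · have : List.countP (fun j => decide (j ∉ s)) (j :: l)
            = List.countP (fun j => decide (j ∉ s)) l := by
          simp [hcnt, hjs]
        rw [this, abs_mul, hc₀abs]
        calc (1/2 : ℝ) * |c| ≤ 1 * |c| := by
              have := abs_nonneg c; nlinarith
          _ = |c| := one_mul _
          _ ≤ _ := hcle
    · refine ⟨(1/2 : ℝ) * c, i', ?_, ?_⟩
      · simp only [List.map_cons, List.prod_cons, hjs, if_neg, hjt, if_false]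
        rw [← mul_assoc, amat_mul_Imat, smul_mul_assoc, hc, smul_smul]
      · have : List.countP (fun j => decide (j ∉ s)) (j :: l)
            = List.countP (fun j => decide (j ∉ s)) l + 1 := by
          simp [hcnt, hjs]
        rw [this, abs_mul, pow_succ]
        have h2 : |(1/2 : ℝ)| = 1/2 := by norm_num [abs]
        rw [h2, mul_comm]
        exact mul_le_mul_of_nonneg_right hcle (by norm_num)
/-- the first element of `t ∪ {n+1}` strictly after `j` -/
noncomputable def nextT (n : ℕ) (t : Finset ℕ) (j : ℕ) : ℕ :=
  sInf {k : ℕ | (k ∈ t ∨ k = n + 1) ∧ j < k}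
lemma nextT_spec (n : ℕ) (t : Finset ℕ) (j : ℕ) (hj : j < n + 1) :
    (nextT n t j ∈ t ∨ nextT n t j = n + 1) ∧ j < nextT n t j := by
  have : {k : ℕ | (k ∈ t ∨ k = n + 1) ∧ j < k}.Nonempty := ⟨n + 1, Or.inr rfl, hj⟩
  exact Nat.sInf_mem this
lemma nextT_le (n : ℕ) (t : Finset ℕ) (j : ℕ) (hj : j < n + 1) : nextT n t j ≤ n + 1 := by
  have : n + 1 ∈ {k : ℕ | (k ∈ t ∨ k = n + 1) ∧ j < k} := ⟨Or.inr rfl, hj⟩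
  exact Nat.sInf_le this
lemma nextT_min (n : ℕ) (t : Finset ℕ) {j l : ℕ} (hl : l ∈ t) (hjl : j < l) :
    nextT n t j ≤ l := by
  have : l ∈ {k : ℕ | (k ∈ t ∨ k = n + 1) ∧ j < k} := ⟨Or.inl hl, hjl⟩
  exact Nat.sInf_le this
/-- number of positions strictly between `j` and the next element of `t ∪ {n+1}` -/
noncomputable def dgap (n : ℕ) (t : Finset ℕ) (j : ℕ) : ℕ := nextT n t j - j - 1
lemma entry_norm_le_one (s t : Finset ℕ) (a : ℕ → Fin 2) (k : ℕ) :
    rowNorm (if k ∈ s then amat (a k) else if k ∈ t then bmat (a k) else Imat (a k)) ≤ 1 := by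
  split_ifs
  · exact rowNorm_amat _
  · exact rowNorm_bmat _
  · exact rowNorm_Imat _
lemma prod_bound (n : ℕ) (a : ℕ → Fin 2) (s t : Finset ℕ) (hs : s ⊆ range (n + 1))
    {j : ℕ} (hj : j ∈ s) :
    rowNorm (prodIAB n a s t) ≤ 2 ^ (s.card - 1) * (1/2 : ℝ) ^ (dgap n t j) := by
  set f : ℕ → Matrix (Fin 2) (Fin 2) ℝ :=
    fun k => if k ∈ s then amat (a k) else if k ∈ t then bmat (a k) else Imat (a k) with hf
  have hjn : j < n + 1 := Finset.mem_range.mp (hs hj)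
  set m := nextT n t j with hm
  obtain ⟨hmem, hjm⟩ := nextT_spec n t j hjn
  have hmn : m ≤ n + 1 := nextT_le n t j hjn
  -- split the list
  have hsplit : List.range (n + 1) = (List.range j ++ [j]) ++
      (List.range' (j+1) (m - (j+1)) ++ List.range' m (n+1-m)) := by
    have h2 := List.range'_append (s := 0) (m := j+1) (n := n-j) (step := 1)
    have h1 := List.range'_append (s := j+1) (m := m-(j+1)) (n := n+1-m) (step := 1)
    rw [one_mul, zero_add] at h2
    rw [one_mul] at h1
    have e1 : (j+1) + (m - (j+1)) = m := by omega
    have e2 : (m - (j+1)) + (n+1-m) = n - j := by omega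
    have e3 : (j+1) + (n - j) = n + 1 := by omega
    rw [e1, e2] at h1
    rw [e3] at h2
    calc List.range (n+1) = List.range' 0 (n+1) := List.range_eq_range'
      _ = List.range' 0 (j+1) ++ List.range' (j+1) (n-j) := h2.symm
      _ = List.range (j+1) ++ List.range' (j+1) (n-j) := by rw [List.range_eq_range']
      _ = (List.range j ++ [j]) ++ (List.range' (j+1) (m-(j+1)) ++ List.range' m (n+1-m)) := by
          rw [List.range_succ, h1]
  set P1 := ((List.range j).map f).prod with hP1def
  set Mid := ((List.range' (j+1) (m - (j+1))).map f).prod with hMiddef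
  set P3 := ((List.range' m (n+1-m)).map f).prod with hP3def
  have hshape : prodIAB n a s t = P1 * ((f j * Mid) * P3) := by
    rw [prodIAB, hsplit]
    simp only [List.map_append, List.prod_append, List.map_cons, List.map_nil,
      List.prod_cons, List.prod_nil, mul_one]
    rw [mul_assoc, ← mul_assoc (f j) Mid P3]
  have hnorm_list : ∀ (L : List ℕ), rowNorm ((L.map f).prod) ≤ 1 := by
    intro L
    apply rowNorm_list_prod_le_one
    intro M hM
    obtain ⟨k, _, rfl⟩ := List.mem_map.mp hM
    exact entry_norm_le_one s t a k
  -- decay along the middle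
  have hmemrange : ∀ k ∈ List.range' (j+1) (m - (j+1)), j < k ∧ k < m := by
    intro k hk
    obtain ⟨i, hi, rfl⟩ := List.mem_range'.mp hk
    omega
  have hmid : ∀ k ∈ List.range' (j+1) (m - (j+1)), k ∉ t := by
    intro k hk hkt
    obtain ⟨h1, h2⟩ := hmemrange k hk
    exact absurd (nextT_min n t hkt h1) (by omega)
  obtain ⟨c, i', hc, hcle⟩ := key_decay s t a (List.range' (j+1) (m - (j+1))) hmid (a j)
  have hfj : f j = amat (a j) := by rw [hf]; simp [hj]
  have b1 : rowNorm (prodIAB n a s t) ≤ |c| := by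
    rw [hshape, hfj, hc]
    calc rowNorm (P1 * (c • amat i' * P3))
        ≤ rowNorm P1 * rowNorm (c • amat i' * P3) := rowNorm_mul_le _ _
      _ ≤ 1 * rowNorm (c • amat i' * P3) :=
          mul_le_mul_of_nonneg_right (hnorm_list _) (rowNorm_nonneg _)
      _ = rowNorm (c • amat i' * P3) := one_mul _
      _ ≤ rowNorm (c • amat i') * rowNorm P3 := rowNorm_mul_le _ _
      _ ≤ rowNorm (c • amat i') * 1 :=
          mul_le_mul_of_nonneg_left (hnorm_list _) (rowNorm_nonneg _)
      _ = |c| * rowNorm (amat i') := by rw [mul_one, rowNorm_smul]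
      _ ≤ |c| * 1 := mul_le_mul_of_nonneg_left (rowNorm_amat _) (abs_nonneg _)
      _ = |c| := mul_one _
  -- counting
  set l := List.range' (j+1) (m - (j+1)) with hldef
  set cnt := l.countP (fun k => decide (k ∉ s)) with hcnt
  have hlen : l.length = m - (j+1) := List.length_range'
  have hsplitcnt := List.length_eq_countP_add_countP (fun k => decide (k ∉ s)) (l := l)
  -- the complementary count is at most s.card - 1
  set cnt2 := l.countP (fun a => decide ¬(decide (a ∉ s) = true)) with hcnt2
  have hcnt2le : cnt2 ≤ s.card - 1 := by
    have hlnodup : l.Nodup := by rw [hldef]; exact List.nodup_range' (h := Nat.one_pos)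
    have hnodup : (l.filter (fun a => decide ¬(decide (a ∉ s) = true))).Nodup :=
      List.Nodup.filter _ hlnodup
    have hsub : (l.filter (fun a => decide ¬(decide (a ∉ s) = true))).toFinset ⊆ s.erase j := by
      intro k hk
      rw [List.mem_toFinset, List.mem_filter] at hk
      obtain ⟨hk1, hk2⟩ := hk
      have hks : k ∈ s := by simpa using hk2
      have := (hmemrange k hk1).1
      exact Finset.mem_erase.mpr ⟨by omega, hks⟩
    have hcard := Finset.card_le_card hsub
    rw [List.toFinset_card_of_nodup hnodup, ← List.countP_eq_length_filter] at hcard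
    calc cnt2 ≤ (s.erase j).card := hcard
      _ = s.card - 1 := Finset.card_erase_of_mem hj
  have hd : dgap n t j ≤ cnt + (s.card - 1) := by
    have : dgap n t j = m - (j+1) := by unfold dgap; omega
    omega
  -- convert to the real bound
  have hpow : (1/2 : ℝ) ^ (cnt + (s.card - 1)) ≤ (1/2 : ℝ) ^ (dgap n t j) :=
    pow_le_pow_of_le_one (by norm_num) (by norm_num) hd
  have h2 : (1/2 : ℝ) ^ cnt = ((1/2 : ℝ) ^ (cnt + (s.card - 1))) * 2 ^ (s.card - 1) := by
    rw [pow_add, mul_assoc, ← mul_pow]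
    norm_num
  calc rowNorm (prodIAB n a s t) ≤ |c| := b1
    _ ≤ (1/2 : ℝ) ^ cnt := hcle
    _ = ((1/2 : ℝ) ^ (cnt + (s.card - 1))) * 2 ^ (s.card - 1) := h2
    _ ≤ (1/2 : ℝ) ^ (dgap n t j) * 2 ^ (s.card - 1) :=
        mul_le_mul_of_nonneg_right hpow (by positivity)
    _ = 2 ^ (s.card - 1) * (1/2 : ℝ) ^ (dgap n t j) := mul_comm _ _
lemma esymm_le (x : ℕ → ℝ) (hx : ∀ j, 0 ≤ x j) (u : Finset ℕ) :
    ∀ (p : ℕ), ∑ s ∈ u.powersetCard p, ∏ j ∈ s, x j ≤ (∑ j ∈ u, x j) ^ p := by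
  induction u using Finset.induction_on with
  | empty =>
    intro p
    cases p with
    | zero => simp
    | succ p =>
      have he : Finset.powersetCard (p+1) (∅ : Finset ℕ) = ∅ := by
        apply Finset.eq_empty_of_forall_notMem
        intro s hs
        rw [Finset.mem_powersetCard] at hs
        have h2 := hs.2
        rw [Finset.subset_empty.mp hs.1] at h2
        simp at h2
      simp [he]
  | @insert a u ha ih =>
    intro p
    cases p with
    | zero => simp
    | succ p =>
      have hS0 : 0 ≤ ∑ j ∈ u, x j := Finset.sum_nonneg fun j _ => hx j
      have hprodnn : ∀ (v : Finset ℕ) (s : Finset ℕ), (0:ℝ) ≤ ∏ j ∈ s, x j :=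
        fun v s => Finset.prod_nonneg fun j _ => hx j
      rw [Finset.powersetCard_succ_insert ha p]
      have hunion := Finset.sum_union_inter (s₁ := u.powersetCard (p+1))
        (s₂ := (u.powersetCard p).image (insert a)) (f := fun s => ∏ j ∈ s, x j)
      have hinternn : (0:ℝ) ≤ ∑ s ∈ u.powersetCard (p+1) ∩ (u.powersetCard p).image (insert a),
          ∏ j ∈ s, x j := Finset.sum_nonneg fun s _ => hprodnn u s
      have himg : ∑ s ∈ (u.powersetCard p).image (insert a), ∏ j ∈ s, x j
          = x a * ∑ s ∈ u.powersetCard p, ∏ j ∈ s, x j := by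
        rw [Finset.sum_image ?_, Finset.mul_sum]
        · apply Finset.sum_congr rfl
          intro s hs
          have has : a ∉ s := fun h => ha ((Finset.mem_powersetCard.mp hs).1 h)
          rw [Finset.prod_insert has]
        · intro s hs r hr hsr
          have has : a ∉ s := fun h => ha ((Finset.mem_powersetCard.mp hs).1 h)
          have har : a ∉ r := fun h => ha ((Finset.mem_powersetCard.mp hr).1 h)
          rw [← Finset.erase_insert has, ← Finset.erase_insert har, hsr]
      have hstep : ∑ s ∈ u.powersetCard (p+1) ∪ (u.powersetCard p).image (insert a),
          ∏ j ∈ s, x j ≤ (∑ j ∈ u, x j) ^ (p+1) + x a * (∑ j ∈ u, x j) ^ p := by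
        have h1 := ih (p+1)
        have h2 := ih p
        have h3 : x a * ∑ s ∈ u.powersetCard p, ∏ j ∈ s, x j
            ≤ x a * (∑ j ∈ u, x j) ^ p := mul_le_mul_of_nonneg_left h2 (hx a)
        linarith [hunion, hinternn, himg]
      rw [Finset.sum_insert ha]
      have hSp : (∑ j ∈ u, x j) ^ p ≤ (x a + ∑ j ∈ u, x j) ^ p :=
        pow_le_pow_left₀ hS0 (by linarith [hx a]) p
      have hfin : (∑ j ∈ u, x j) ^ (p+1) + x a * (∑ j ∈ u, x j) ^ p
          ≤ (x a + ∑ j ∈ u, x j) ^ (p+1) := by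
        have h4 : (x a + ∑ j ∈ u, x j) ^ (p+1)
            = (x a + ∑ j ∈ u, x j) * (x a + ∑ j ∈ u, x j) ^ p := by ring
        have h5 : (x a + ∑ j ∈ u, x j) * (∑ j ∈ u, x j) ^ p
            ≤ (x a + ∑ j ∈ u, x j) * (x a + ∑ j ∈ u, x j) ^ p :=
          mul_le_mul_of_nonneg_left hSp (by linarith [hx a])
        have h6 : (0:ℝ) ≤ (∑ j ∈ u, x j) ^ p := pow_nonneg hS0 p
        nlinarith [pow_succ (∑ j ∈ u, x j) p]
      exact hstep.trans hfin
lemma geom_block (n q : ℕ) (t : Finset ℕ) (hq : t.card = q)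
    (r : ℝ) (h0 : 0 < r) (h1 : r < 1) :
    ∑ j ∈ range (n+1), r ^ (dgap n t j) ≤ ((q:ℝ)+1) * (1-r)⁻¹ := by
  have hinj : ∀ x ∈ range (n+1), ∀ y ∈ range (n+1),
      (fun j => (nextT n t j, dgap n t j)) x = (fun j => (nextT n t j, dgap n t j)) y
        → x = y := by
    intro x hx y hy hxy
    simp only [Prod.mk.injEq] at hxy
    have hx' := (nextT_spec n t x (mem_range.mp hx)).2
    have hy' := (nextT_spec n t y (mem_range.mp hy)).2
    unfold dgap at hxy
    omega
  have himg : ∑ j ∈ range (n+1), r ^ (dgap n t j)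
      = ∑ x ∈ (range (n+1)).image (fun j => (nextT n t j, dgap n t j)), r ^ x.2 :=
    (Finset.sum_image (f := fun x : ℕ × ℕ => r ^ x.2) hinj).symm
  rw [himg]
  have hsub : (range (n+1)).image (fun j => (nextT n t j, dgap n t j))
      ⊆ (insert (n+1) t) ×ˢ range (n+1) := by
    intro x hx
    obtain ⟨j, hj, rfl⟩ := Finset.mem_image.mp hx
    have hjn := Finset.mem_range.mp hj
    obtain ⟨hmem, hlt⟩ := nextT_spec n t j hjn
    have hle := nextT_le n t j hjn
    refine Finset.mem_product.mpr ⟨?_, ?_⟩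
    · rcases hmem with h | h
      · exact Finset.mem_insert_of_mem h
      · rw [h]; exact Finset.mem_insert_self _ _
    · refine Finset.mem_range.mpr ?_
      unfold dgap
      omega
  have h1r : 0 < 1 - r := by linarith
  have hgeom : ∑ d ∈ range (n+1), r ^ d ≤ (1-r)⁻¹ := by
    rw [geom_sum_eq (ne_of_lt h1)]
    have he : (r ^ (n+1) - 1) / (r - 1) = (1 - r ^ (n+1)) / (1 - r) := by
      rw [← neg_div_neg_eq]
      ring_nf
    rw [he, ← one_div]
    have hnum : 1 - r ^ (n+1) ≤ 1 := by nlinarith [pow_nonneg h0.le (n+1)]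
    gcongr
  have hcard : ((insert (n+1) t).card : ℝ) ≤ (q:ℝ) + 1 := by
    have := Finset.card_insert_le (n+1) t
    rw [hq] at this
    exact_mod_cast this
  have hgnn : 0 ≤ ∑ d ∈ range (n+1), r ^ d :=
    Finset.sum_nonneg fun d _ => pow_nonneg h0.le d
  calc ∑ x ∈ (range (n+1)).image (fun j => (nextT n t j, dgap n t j)), r ^ x.2
      ≤ ∑ x ∈ (insert (n+1) t) ×ˢ range (n+1), r ^ x.2 :=
        Finset.sum_le_sum_of_subset_of_nonneg hsub (fun x _ _ => pow_nonneg h0.le x.2)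
    _ = ∑ m ∈ insert (n+1) t, ∑ d ∈ range (n+1), r ^ d := Finset.sum_product _ _ _
    _ = ((insert (n+1) t).card : ℝ) * ∑ d ∈ range (n+1), r ^ d := by
        rw [Finset.sum_const, nsmul_eq_mul]
    _ ≤ ((q:ℝ)+1) * (1-r)⁻¹ :=
        mul_le_mul hcard hgeom hgnn (by positivity)
lemma prodIAB_le_one (n : ℕ) (a : ℕ → Fin 2) (s t : Finset ℕ) :
    rowNorm (prodIAB n a s t) ≤ 1 := by
  apply rowNorm_list_prod_le_one
  intro M hM
  obtain ⟨k, _, rfl⟩ := List.mem_map.mp hM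
  exact entry_norm_le_one s t a k

theorem type_p_q_contribution (p q : ℕ) :
    ∃ C : ℝ, 0 < C ∧ ∀ (n : ℕ) (a : ℕ → Fin 2),
      ∑ s ∈ (range (n + 1)).powersetCard p,
        ∑ t ∈ (range (n + 1)).powersetCard q,
          (if Disjoint s t then rowNorm (prodIAB n a s t) else 0)
        ≤ C * ((n : ℝ) + 1) ^ q := by
  rcases Nat.eq_zero_or_pos p with hp | hp
  · subst hp
    refine ⟨1, one_pos, fun n a => ?_⟩
    rw [Finset.powersetCard_zero, Finset.sum_singleton]
    have hb : ∀ t ∈ (range (n+1)).powersetCard q,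
        (if Disjoint (∅ : Finset ℕ) t then rowNorm (prodIAB n a ∅ t) else 0) ≤ 1 := by
      intro t _
      rw [if_pos (Finset.disjoint_empty_left t)]
      exact prodIAB_le_one n a ∅ t
    calc ∑ t ∈ (range (n+1)).powersetCard q,
          (if Disjoint (∅ : Finset ℕ) t then rowNorm (prodIAB n a ∅ t) else 0)
        ≤ ((range (n+1)).powersetCard q).card • (1:ℝ) :=
          Finset.sum_le_card_nsmul _ _ _ hb
      _ = ((n+1).choose q : ℝ) := by
          rw [Finset.card_powersetCard, Finset.card_range, nsmul_eq_mul, mul_one]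
      _ ≤ ((n:ℝ)+1)^q := by
          have := Nat.choose_le_pow (n+1) q
          exact_mod_cast this
      _ = 1 * ((n:ℝ)+1)^q := (one_mul _).symm
  · set r : ℝ := (1/2 : ℝ) ^ ((p : ℝ)⁻¹) with hr
    have hr0 : 0 < r := Real.rpow_pos_of_pos (by norm_num) _
    have hr1 : r < 1 := Real.rpow_lt_one (by norm_num) (by norm_num) (by positivity)
    have h1r : 0 < 1 - r := by linarith
    have hrp : r ^ p = 1/2 := by
      rw [hr, ← Real.rpow_natCast ((1/2:ℝ) ^ ((p:ℝ)⁻¹)) p, ← Real.rpow_mul (by norm_num),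
        inv_mul_cancel₀ (show (p:ℝ) ≠ 0 by exact_mod_cast hp.ne'), Real.rpow_one]
    set C1 : ℝ := 2 ^ (p-1) * (((q:ℝ)+1) * (1-r)⁻¹) ^ p with hC1
    have hC1pos : 0 < C1 := by positivity
    refine ⟨C1, hC1pos, fun n a => ?_⟩
    rw [Finset.sum_comm]
    have hinner : ∀ t ∈ (range (n+1)).powersetCard q,
        ∑ s ∈ (range (n+1)).powersetCard p,
          (if Disjoint s t then rowNorm (prodIAB n a s t) else 0) ≤ C1 := by
      intro t ht
      obtain ⟨htsub, htcard⟩ := Finset.mem_powersetCard.mp ht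
      have hterm : ∀ s ∈ (range (n+1)).powersetCard p,
          (if Disjoint s t then rowNorm (prodIAB n a s t) else 0)
          ≤ 2 ^ (p-1) * ∏ j ∈ s, r ^ (dgap n t j) := by
        intro s hsmem
        obtain ⟨hssub, hscard⟩ := Finset.mem_powersetCard.mp hsmem
        split_ifs with hd
        · have hne : s.Nonempty := Finset.card_pos.mp (by omega)
          obtain ⟨j0, hj0, hmax⟩ := Finset.exists_max_image s (fun j => dgap n t j) hne
          have hb := prod_bound n a s t hssub hj0
          rw [hscard] at hb
          have hsum_le : ∑ j ∈ s, dgap n t j ≤ p * dgap n t j0 := by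
            calc ∑ j ∈ s, dgap n t j ≤ s.card • dgap n t j0 :=
                Finset.sum_le_card_nsmul _ _ _ hmax
              _ = p * dgap n t j0 := by rw [hscard, smul_eq_mul]
          have h7 : (1/2:ℝ) ^ dgap n t j0 = r ^ (p * dgap n t j0) := by
            rw [pow_mul, hrp]
          have h8 : r ^ (p * dgap n t j0) ≤ r ^ (∑ j ∈ s, dgap n t j) :=
            pow_le_pow_of_le_one hr0.le hr1.le hsum_le
          have h9 : (∏ j ∈ s, r ^ dgap n t j) = r ^ (∑ j ∈ s, dgap n t j) :=
            Finset.prod_pow_eq_pow_sum s _ r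
          calc rowNorm (prodIAB n a s t) ≤ 2 ^ (p-1) * (1/2:ℝ) ^ dgap n t j0 := hb
            _ = 2 ^ (p-1) * r ^ (p * dgap n t j0) := by rw [h7]
            _ ≤ 2 ^ (p-1) * r ^ (∑ j ∈ s, dgap n t j) :=
                mul_le_mul_of_nonneg_left h8 (by positivity)
            _ = 2 ^ (p-1) * ∏ j ∈ s, r ^ dgap n t j := by rw [h9]
        · positivity
      calc ∑ s ∈ (range (n+1)).powersetCard p,
            (if Disjoint s t then rowNorm (prodIAB n a s t) else 0)
          ≤ ∑ s ∈ (range (n+1)).powersetCard p, 2 ^ (p-1) * ∏ j ∈ s, r ^ dgap n t j :=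
            Finset.sum_le_sum hterm
        _ = 2 ^ (p-1) * ∑ s ∈ (range (n+1)).powersetCard p, ∏ j ∈ s, r ^ dgap n t j := by
            rw [Finset.mul_sum]
        _ ≤ 2 ^ (p-1) * (∑ j ∈ range (n+1), r ^ dgap n t j) ^ p :=
            mul_le_mul_of_nonneg_left
              (esymm_le (fun j => r ^ dgap n t j) (fun j => pow_nonneg hr0.le _) _ p)
              (by positivity)
        _ ≤ C1 := by
            rw [hC1]
            refine mul_le_mul_of_nonneg_left ?_ (by positivity)
            exact pow_le_pow_left₀
              (Finset.sum_nonneg fun j _ => pow_nonneg hr0.le _)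
              (geom_block n q t htcard r hr0 hr1) p
    calc ∑ t ∈ (range (n+1)).powersetCard q,
          ∑ s ∈ (range (n+1)).powersetCard p,
            (if Disjoint s t then rowNorm (prodIAB n a s t) else 0)
        ≤ ((range (n+1)).powersetCard q).card • C1 :=
          Finset.sum_le_card_nsmul _ _ _ hinner
      _ = ((n+1).choose q : ℝ) * C1 := by
          rw [Finset.card_powersetCard, Finset.card_range, nsmul_eq_mul]
      _ ≤ ((n:ℝ)+1)^q * C1 := by
          have hcast : ((n+1).choose q : ℝ) ≤ ((n:ℝ)+1)^q := by
            exact_mod_cast Nat.choose_le_pow (n+1) q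
          exact mul_le_mul_of_nonneg_right hcast hC1pos.le
      _ = C1 * ((n:ℝ)+1)^q := mul_comm _ _
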